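/- Let p > 1 and c > 0. Then Re ∫_{-∞}^∞ (1 + (i·sign(σ)/c)·|σ|^p)^{-2} dσ > 0. -/

import Mathlib

open MeasureTheory Set

lemma stmt9_re_aux (t : ℝ) :
    ((((1:ℂ) + (t:ℂ) * Complex.I)) ^ 2)⁻¹.re = (1 - t^2) / (1 + t^2)^2 := by
  rw [Complex.inv_re, map_pow]
  simp [pow_two, Complex.mul_re, Complex.add_re, Complex.add_im, Complex.normSq_apply]

lemma stmt9_norm_aux (t : ℝ) :
    ‖((((1:ℂ) + (t:ℂ) * Complex.I)) ^ 2)⁻¹‖ = (1 + t^2)⁻¹ := by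
  rw [norm_inv, norm_pow]
  congr 1
  rw [Complex.sq_norm]
  have h := Complex.normSq_add_mul_I 1 t
  push_cast at h
  rw [h]; ring

lemma stmt9_abs_F_le (v : ℝ) (hv : 0 ≤ v) : |(1-v)/(1+v)^2| ≤ (1+v)⁻¹ := by
  rw [abs_div, abs_of_nonneg (by positivity : (0:ℝ) ≤ (1+v)^2)]
  have h1 : |1-v| ≤ 1+v := abs_le.mpr ⟨by linarith, by linarith⟩
  calc |1-v|/(1+v)^2 ≤ (1+v)/(1+v)^2 := by gcongr
    _ = (1+v)⁻¹ := by rw [pow_two, ← div_div, div_self (by positivity), one_div]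

lemma stmt9_key_bound (p c : ℝ) (hp : 1 < p) (hc : 0 < c) (σ : ℝ) :
    ((1:ℝ) + (|σ| ^ p)^2 / c^2)⁻¹ ≤ (2 ^ (2*p) * max 1 (c^2)) * (1 + |σ|) ^ (-(2*p)) := by
  have h2p : (0:ℝ) < 2 * p := by linarith
  have hA : (0:ℝ) < (1 + |σ|) ^ (2*p) := Real.rpow_pos_of_pos (by positivity) _
  have hv : (0:ℝ) ≤ (|σ| ^ p)^2 / c^2 := by positivity
  rw [Real.rpow_neg (by positivity), ← div_eq_mul_inv, inv_eq_one_div,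
    div_le_div_iff₀ (by positivity) hA]
  have h1 : (1 + |σ|) ^ (2*p) ≤ 2 ^ (2*p) * (max 1 |σ|) ^ (2*p) := by
    rw [← Real.mul_rpow (by norm_num) (le_max_of_le_left zero_le_one)]
    apply Real.rpow_le_rpow (by positivity) _ h2p.le
    rcases le_total |σ| 1 with h | h
    · rw [max_eq_left h]; linarith
    · rw [max_eq_right h]; linarith [abs_nonneg σ]
  have h2 : (max 1 |σ|) ^ (2*p) ≤ 1 + (|σ| ^ p)^2 := by
    have habs : |σ| ^ (2*p) = (|σ| ^ p)^2 := by
      rw [mul_comm, Real.rpow_mul (abs_nonneg σ), Real.rpow_two]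
    rcases le_total |σ| 1 with h | h
    · rw [max_eq_left h, Real.one_rpow]
      nlinarith [Real.rpow_nonneg (abs_nonneg σ) p]
    · rw [max_eq_right h, habs]
      nlinarith
  have h3 : 1 + (|σ| ^ p)^2 ≤ max 1 (c^2) * (1 + (|σ| ^ p)^2 / c^2) := by
    have hm1 : (1:ℝ) ≤ max 1 (c^2) := le_max_left _ _
    have hm2 : c^2 ≤ max 1 (c^2) := le_max_right _ _
    have hc2 : (0:ℝ) < c^2 := by positivity
    have : max 1 (c^2) * ((|σ| ^ p)^2 / c^2) ≥ (|σ| ^ p)^2 := by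
      have h5 := mul_le_mul_of_nonneg_right hm2 (by positivity : (0:ℝ) ≤ (|σ|^p)^2/c^2)
      have h4 : c^2 * ((|σ|^p)^2/c^2) = (|σ|^p)^2 := by field_simp
      linarith
    nlinarith [sq_nonneg (|σ| ^ p)]
  calc (1:ℝ) * (1 + |σ|) ^ (2*p) = (1 + |σ|) ^ (2*p) := one_mul _
    _ ≤ 2 ^ (2*p) * (max 1 |σ|) ^ (2*p) := h1
    _ ≤ 2 ^ (2*p) * (1 + (|σ| ^ p)^2) := by
        have : (0:ℝ) < 2 ^ (2*p) := Real.rpow_pos_of_pos (by norm_num) _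
        nlinarith
    _ ≤ 2 ^ (2*p) * (max 1 (c^2) * (1 + (|σ| ^ p)^2 / c^2)) := by
        have : (0:ℝ) < 2 ^ (2*p) := Real.rpow_pos_of_pos (by norm_num) _
        nlinarith
    _ = 2 ^ (2*p) * max 1 (c^2) * (1 + (|σ| ^ p)^2 / c^2) := by ring

lemma stmt9_alg_aux (t c a s : ℝ) (ht : 0 < t) (hc : 0 < c) (hs : 0 < s) :
    (1 - t^2/c^2)/(1+t^2/c^2)^2 + a^2/s^2 * ((1 - (c^2/t)^2/c^2)/(1+(c^2/t)^2/c^2)^2)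
    = (c^2-t^2)*(c^2*s^2-a^2*t^2)/((c^2+t^2)^2*s^2) := by
  have h1 : c^2+t^2 ≠ 0 := by positivity
  field_simp
  ring

lemma stmt9_main_pos (p c : ℝ) (hp : 1 < p) (hc : 0 < c)
    (hF : IntegrableOn (fun x : ℝ => (1 - (x^p)^2/c^2)/(1+(x^p)^2/c^2)^2) (Ioi 0)) :
    0 < ∫ x in Ioi (0:ℝ), (1 - (x^p)^2/c^2)/(1+(x^p)^2/c^2)^2 := by
  set F : ℝ → ℝ := fun x => (1 - (x^p)^2/c^2)/(1+(x^p)^2/c^2)^2 with hF_def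
  have hp0 : (0:ℝ) < p := by linarith
  set a : ℝ := c ^ p⁻¹ with ha_def
  have ha : 0 < a := Real.rpow_pos_of_pos hc _
  have hap : a ^ p = c := Real.rpow_inv_rpow hc.le (by positivity)
  have himg : (fun s : ℝ => a^2/s) '' Ioo 0 a = Ioi a := by
    ext y
    constructor
    · rintro ⟨s, ⟨hs0, hsa⟩, rfl⟩
      have h1 : a^2/a < a^2/s := div_lt_div_of_pos_left (by positivity) hs0 hsa
      have h2 : a^2/a = a := by field_simp [ha.ne']
      simpa [h2] using h1
    · intro hy
      have hy' : a < y := hy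
      refine ⟨a^2/y, ⟨div_pos (by positivity) (by linarith), ?_⟩, ?_⟩
      · rw [div_lt_iff₀ (by linarith : (0:ℝ) < y)]
        nlinarith
      · field_simp
  have hderiv : ∀ x ∈ Ioo (0:ℝ) a,
      HasDerivWithinAt (fun s : ℝ => a^2/s) (-(a^2)/x^2) (Ioo 0 a) x := by
    intro x hx
    have hx0 : x ≠ 0 := ne_of_gt hx.1
    have h := ((hasDerivAt_inv hx0).const_mul (a^2)).hasDerivWithinAt (s := Ioo 0 a)
    have h1 : (fun s : ℝ => a^2/s) = fun y => a^2 * y⁻¹ := by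
      funext y; rw [div_eq_mul_inv]
    have h2 : -(a^2)/x^2 = a^2 * -(x^2)⁻¹ := by field_simp
    rw [h1, h2]; exact h
  have hinj : InjOn (fun s : ℝ => a^2/s) (Ioo 0 a) := by
    intro x hx y hy h
    simp only at h
    rw [div_eq_div_iff hx.1.ne' hy.1.ne'] at h
    exact (mul_left_cancel₀ (by positivity : (a:ℝ)^2 ≠ 0) h).symm
  have hcv : ∫ x in Ioi a, F x = ∫ s in Ioo 0 a, |(-(a^2)/s^2)| • F (a^2/s) := by
    rw [← himg, integral_image_eq_integral_abs_deriv_smul measurableSet_Ioo hderiv hinj]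
  have hint1 : IntegrableOn F (Ioo 0 a) := hF.mono_set Ioo_subset_Ioi_self
  have hint2 : IntegrableOn (fun s : ℝ => |(-(a^2)/s^2)| • F (a^2/s)) (Ioo 0 a) := by
    rw [← integrableOn_image_iff_integrableOn_abs_deriv_smul measurableSet_Ioo hderiv hinj]
    rw [himg]
    exact hF.mono_set (Ioi_subset_Ioi ha.le)
  have hici : IntegrableOn F (Ici a) :=
    (hF.mono_set (Ioi_subset_Ioi ha.le)).congr_set_ae Ioi_ae_eq_Ici.symm
  have hdisj : Disjoint (Ioo (0:ℝ) a) (Ici a) :=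
    Set.disjoint_left.mpr fun x hx hx' => absurd hx.2 (not_lt.mpr hx')
  have hsplit : ∫ x in Ioi (0:ℝ), F x
      = (∫ x in Ioo (0:ℝ) a, F x) + ∫ x in Ici a, F x := by
    rw [← Ioo_union_Ici_eq_Ioi ha]
    exact setIntegral_union hdisj measurableSet_Ici hint1 hici
  have hcomb : (∫ x in Ioo (0:ℝ) a, F x) + ∫ s in Ioo (0:ℝ) a, |(-(a^2)/s^2)| • F (a^2/s)
      = ∫ s in Ioo (0:ℝ) a, (F s + |(-(a^2)/s^2)| • F (a^2/s)) :=
    (integral_add hint1 hint2).symm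
  rw [hsplit, MeasureTheory.integral_Ici_eq_integral_Ioi, hcv, hcomb]
  have hpos : ∀ s ∈ Ioo (0:ℝ) a, 0 < F s + |(-(a^2)/s^2)| • F (a^2/s) := by
    intro s hs
    obtain ⟨hs0, hsa⟩ := hs
    set t : ℝ := s ^ p with ht_def
    have ht0 : 0 < t := Real.rpow_pos_of_pos hs0 _
    have htc : t < c := by
      rw [ht_def, ← hap]
      exact Real.rpow_lt_rpow hs0.le hsa hp0
    have habs : |(-(a^2)/s^2)| = a^2/s^2 := by
      rw [abs_div, abs_neg, abs_of_nonneg (by positivity : (0:ℝ) ≤ a^2),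
        abs_of_nonneg (by positivity : (0:ℝ) ≤ s^2)]
    have hFs : F s = (1 - t^2/c^2)/(1+t^2/c^2)^2 := rfl
    have ha2p : (a^2)^p = c^2 := by
      rw [← Real.rpow_natCast a 2, ← Real.rpow_mul ha.le, mul_comm,
        Real.rpow_mul ha.le, hap, Real.rpow_natCast]
    have hasp : (a^2/s) ^ p = c^2 / t := by
      rw [Real.div_rpow (by positivity) hs0.le, ha2p, ht_def]
    have hFas : F (a^2/s) = (1 - (c^2/t)^2/c^2)/(1+(c^2/t)^2/c^2)^2 := by
      rw [hF_def]; simp only [hasp]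
    have hkey : a * t < c * s := by
      have e1 : s * s^(p-1) = t := by
        calc s * s^(p-1) = s^(1:ℝ) * s^(p-1) := by rw [Real.rpow_one]
          _ = s^(1+(p-1)) := (Real.rpow_add hs0 _ _).symm
          _ = s^p := by rw [show (1:ℝ)+(p-1) = p by ring]
      have e2 : a * a^(p-1) = c := by
        calc a * a^(p-1) = a^(1:ℝ) * a^(p-1) := by rw [Real.rpow_one]
          _ = a^(1+(p-1)) := (Real.rpow_add ha _ _).symm
          _ = a^p := by rw [show (1:ℝ)+(p-1) = p by ring]
          _ = c := hap
      have e3 : s^(p-1) < a^(p-1) := Real.rpow_lt_rpow hs0.le hsa (by linarith)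
      have e4 : 0 < s^(p-1) := Real.rpow_pos_of_pos hs0 _
      nlinarith [mul_pos ha hs0]
    rw [habs, hFs, hFas, smul_eq_mul, stmt9_alg_aux t c a s ht0 hc hs0]
    apply div_pos
    · apply mul_pos
      · nlinarith
      · nlinarith [mul_pos (sub_pos.mpr hkey) (add_pos (mul_pos hc hs0) (mul_pos ha ht0))]
    · positivity
  have hnn : 0 ≤ᵐ[volume.restrict (Ioo (0:ℝ) a)]
      fun s => F s + |(-(a^2)/s^2)| • F (a^2/s) :=
    ae_restrict_of_forall_mem measurableSet_Ioo fun s hs => (hpos s hs).le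
  refine (setIntegral_pos_iff_support_of_nonneg_ae hnn (hint1.add hint2)).mpr ?_
  have hsub : Ioo (0:ℝ) a ⊆ Function.support fun s => F s + |(-(a^2)/s^2)| • F (a^2/s) :=
    fun s hs => ne_of_gt (hpos s hs)
  rw [Set.inter_eq_self_of_subset_right hsub, Real.volume_Ioo]
  simp [ha]

/-- for p > 1 and c > 0, Re ∫ (1 + (i·sign σ / c)|σ|^p)^{-2} dσ > 0. -/
theorem stmt9 (p c : ℝ) (hp : 1 < p) (hc : 0 < c) :
    0 < (∫ σ : ℝ,
        (((1 : ℂ) + (Real.sign σ : ℂ) * Complex.I / (c : ℂ) * ((|σ| ^ p : ℝ) : ℂ)) ^ 2)⁻¹).re := by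
  have hp0 : (0:ℝ) < p := by linarith
  set f : ℝ → ℂ := fun σ =>
    (((1 : ℂ) + (Real.sign σ : ℂ) * Complex.I / (c : ℂ) * ((|σ| ^ p : ℝ) : ℂ)) ^ 2)⁻¹ with hf_def
  set F : ℝ → ℝ := fun x => (1 - (x^p)^2/c^2)/(1+(x^p)^2/c^2)^2 with hF_def
  have hts : ∀ σ : ℝ, (Real.sign σ : ℂ) * Complex.I / (c : ℂ) * ((|σ| ^ p : ℝ) : ℂ)
      = ((Real.sign σ * |σ| ^ p / c : ℝ) : ℂ) * Complex.I := by
    intro σ; push_cast; ring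
  have htsq : ∀ σ : ℝ, (Real.sign σ * |σ| ^ p / c)^2 = (|σ| ^ p)^2 / c^2 := by
    intro σ
    by_cases h : σ = 0
    · subst h; simp [Real.sign_zero, abs_zero, Real.zero_rpow hp0.ne']
    · rcases Real.sign_apply_eq_of_ne_zero σ h with h1 | h1 <;> rw [h1] <;> ring
  have hre : ∀ σ : ℝ, (f σ).re = F |σ| := by
    intro σ
    rw [hf_def]
    simp only
    rw [hts σ, stmt9_re_aux, htsq σ]
  have hnorm : ∀ σ : ℝ, ‖f σ‖ = ((1:ℝ) + (|σ| ^ p)^2 / c^2)⁻¹ := by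
    intro σ
    rw [hf_def]
    simp only
    rw [hts σ, stmt9_norm_aux, htsq σ]
  have hmf : Measurable f := by
    have msign : Measurable Real.sign := by
      have : Real.sign = fun r : ℝ => if r < 0 then (-1:ℝ) else if 0 < r then 1 else 0 := by
        funext r; rfl
      rw [this]
      exact Measurable.ite measurableSet_Iio measurable_const
        (Measurable.ite measurableSet_Ioi measurable_const measurable_const)
    have m1 : Measurable fun σ : ℝ => |σ| ^ p :=
      ((Real.continuous_rpow_const hp0.le).comp continuous_abs).measurable
    rw [hf_def]
    fun_prop
  have hmG : Measurable fun σ : ℝ => F |σ| := by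
    have m1 : Measurable fun σ : ℝ => |σ| ^ p :=
      ((Real.continuous_rpow_const hp0.le).comp continuous_abs).measurable
    rw [hF_def]
    fun_prop
  have hgint : Integrable fun σ : ℝ => (2 ^ (2*p) * max 1 (c^2)) * (1 + ‖σ‖) ^ (-(2*p)) := by
    apply Integrable.const_mul
    apply integrable_one_add_norm
    simp only [Module.finrank_self, Nat.cast_one]
    linarith
  have hfint : Integrable f := by
    apply hgint.mono' hmf.aestronglyMeasurable
    filter_upwards with σ
    rw [hnorm σ, Real.norm_eq_abs]
    exact stmt9_key_bound p c hp hc σ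
  have hGint : Integrable fun σ : ℝ => F |σ| := by
    apply hgint.mono' hmG.aestronglyMeasurable
    filter_upwards with σ
    rw [Real.norm_eq_abs, Real.norm_eq_abs]
    calc abs (F |σ|) ≤ ((1:ℝ) + (|σ| ^ p)^2 / c^2)⁻¹ :=
          stmt9_abs_F_le _ (by positivity)
      _ ≤ (2 ^ (2*p) * max 1 (c^2)) * (1 + |σ|) ^ (-(2*p)) := stmt9_key_bound p c hp hc σ
  have h := integral_re (μ := volume) hfint
  simp only [RCLike.re_to_complex] at h
  rw [← h, integral_congr_ae (Filter.Eventually.of_forall hre), integral_comp_abs (f := F)]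
  have hFIoi : IntegrableOn F (Ioi 0) :=
    (hGint.integrableOn).congr_fun (fun x hx => by show F |x| = F x; rw [abs_of_pos hx]) measurableSet_Ioi
  have := stmt9_main_pos p c hp hc hFIoi
  rw [hF_def]
  positivity
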